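/- Let G be a closed (vacuum) 4-valent 3D GFT graph, with V, L, F, B its numbers of vertices, lines, faces and bubbles, and let the 2D projection satisfy |v| = 4V, |l| = 3L, |f| = 2F, |b| = B, with the 2D projection being a disjoint union of closed orientable surfaces of genera g_b. Then V - L + F - B = -Σ_B g_B. -/
import Mathlib


/-- Let `G` be a closed (vacuum) 4-valent 3D GFT graph, with `V, L, F, B`
its numbers of vertices, lines, faces and bubbles (so `2V = L` since every 4-valent vertex
contributes 4 half-lines paired into lines).  Suppose its 2D projection satisfies
`|v| = 4V`, `|l| = 3L`, `|f| = 2F`, `|b| = B`, and is a disjoint union of closed orientable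
surfaces indexed by `ι` of genera `g b`, so that `|v| - |l| + |f| = Σ_b (2 - 2 g_b)`.
Then `V - L + F - B = - Σ_B g_B`. -/
theorem gft3_euler_identity
    {ι : Type*} [Fintype ι] (V L F B v l f : ℤ) (g : ι → ℤ)
    (hvalent : 2 * V = L)
    (hv : v = 4 * V) (hl : l = 3 * L) (hf : f = 2 * F)
    (hb : (Fintype.card ι : ℤ) = B)
    (hsurf : v - l + f = ∑ b : ι, (2 - 2 * g b)) :
    V - L + F - B = -∑ b : ι, g b := by
  have : ∑ b : ι, (2 - 2 * g b) = 2 * B - 2 * ∑ b : ι, g b := by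
    rw [Finset.sum_sub_distrib, ← Finset.mul_sum]
    simp [hb.symm, mul_comm]
  rw [this] at hsurf
  linarith
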